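/- The R-linear endomorphisms M and N of V are mutually inverse: M ∘ N = id_V and N ∘ M = id_V. -/

import Mathlib

open Finset

section Aux

variable {R : Type*} [CommRing R] (x : Rˣ)

private lemma zpow_mul_self (a b : ℤ) :
    ((x ^ a : Rˣ) : R) * ((x ^ b : Rˣ) : R) = ((x ^ (a + b) : Rˣ) : R) := by
  rw [← Units.val_mul, ← zpow_add]

private lemma zpow_mul_sub (z : ℤ) :
    ((x ^ z : Rˣ) : R) * ((x : R) - 1) = ((x ^ (z + 1) : Rˣ) : R) - ((x ^ z : Rˣ) : R) := by
  have h : ((x ^ z : Rˣ) : R) * ((x : R)) = ((x ^ (z + 1) : Rˣ) : R) := by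
    rw [zpow_add_one, Units.val_mul]
  rw [mul_sub, mul_one, h]

private lemma inv_as_zpow : ((x⁻¹ : Rˣ) : R) = ((x ^ (-1 : ℤ) : Rˣ) : R) := by
  rw [zpow_neg, zpow_one]

private lemma geomA (m : ℕ) :
    (∑ k ∈ Finset.range m, ((x ^ ((k : ℤ) - (m : ℤ)) : Rˣ) : R)) * ((x : R) - 1)
      = 1 - ((x ^ (-(m : ℤ)) : Rˣ) : R) := by
  induction m with
  | zero => simp
  | succ m ih =>
    rw [Finset.sum_range_succ']
    have h1 : ∀ k : ℕ, (((k + 1 : ℕ)) : ℤ) - ((m + 1 : ℕ) : ℤ) = (k : ℤ) - (m : ℤ) := by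
      intro k; push_cast; ring
    have h2 : ((0 : ℕ) : ℤ) - ((m + 1 : ℕ) : ℤ) = -((m : ℤ) + 1) := by push_cast; ring
    simp only [h1, h2]
    rw [add_mul, ih, zpow_mul_sub]
    have h3 : (-((m : ℤ) + 1)) + 1 = -(m : ℤ) := by ring
    have h4 : -((m + 1 : ℕ) : ℤ) = -((m : ℤ) + 1) := by push_cast; ring
    rw [h3, h4]
    ring

private lemma geomB (m : ℕ) :
    (∑ k ∈ Finset.range m, ((x ^ (-1 - (k : ℤ)) : Rˣ) : R)) * ((x : R) - 1)
      = 1 - ((x ^ (-(m : ℤ)) : Rˣ) : R) := by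
  induction m with
  | zero => simp
  | succ m ih =>
    rw [Finset.sum_range_succ, add_mul, ih, zpow_mul_sub]
    have h3 : (-1 - (m : ℤ)) + 1 = -(m : ℤ) := by ring
    have h4 : (-1 - (m : ℤ)) = -((m + 1 : ℕ) : ℤ) := by push_cast; ring
    rw [h3, h4]
    ring

/-- The scalar identity for `M ∘ N`. -/
private lemma keyMN (t j : ℕ) (h : t < j) :
    (1 - ((x⁻¹ : Rˣ) : R))
      + (-(((x ^ ((t : ℤ) - (j : ℤ)) : Rˣ) : R) * ((x : R) - 1)))
      + ∑ s ∈ Finset.Icc (t + 1) (j - 1),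
          (-(((x ^ ((s : ℤ) - (j : ℤ)) : Rˣ) : R) * ((x : R) - 1)))
            * (1 - ((x⁻¹ : Rˣ) : R)) = 0 := by
  obtain ⟨m, rfl⟩ : ∃ m, j = t + 1 + m := ⟨j - t - 1, by omega⟩
  have hIcc : Finset.Icc (t + 1) (t + 1 + m - 1) = Finset.Ico (t + 1) (t + 1 + m) := by
    ext s; simp only [Finset.mem_Icc, Finset.mem_Ico]; omega
  rw [hIcc, Finset.sum_Ico_eq_sum_range]
  have hm : t + 1 + m - (t + 1) = m := by omega
  rw [hm]
  have hexp : ∀ k : ℕ, ((t + 1 + k : ℕ) : ℤ) - ((t + 1 + m : ℕ) : ℤ) = (k : ℤ) - (m : ℤ) := by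
    intro k; push_cast; ring
  simp only [hexp]
  have hsum : ∑ k ∈ Finset.range m,
      (-(((x ^ ((k : ℤ) - (m : ℤ)) : Rˣ) : R) * ((x : R) - 1))) * (1 - ((x⁻¹ : Rˣ) : R))
      = -((1 - ((x ^ (-(m : ℤ)) : Rˣ) : R)) * (1 - ((x⁻¹ : Rˣ) : R))) := by
    have hterm : ∀ k ∈ Finset.range m,
        (-(((x ^ ((k : ℤ) - (m : ℤ)) : Rˣ) : R) * ((x : R) - 1))) * (1 - ((x⁻¹ : Rˣ) : R))
          = (((x ^ ((k : ℤ) - (m : ℤ)) : Rˣ) : R) * ((x : R) - 1)) * (-(1 - ((x⁻¹ : Rˣ) : R))) := by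
      intro k _; ring
    rw [Finset.sum_congr rfl hterm, ← Finset.sum_mul, ← Finset.sum_mul, geomA]
    ring
  rw [hsum]
  have hte : ((t : ℤ)) - ((t + 1 + m : ℕ) : ℤ) = -((m : ℤ) + 1) := by push_cast; ring
  rw [hte]
  -- reduce to pure zpow algebra
  have e1 : ((x ^ (-((m : ℤ) + 1)) : Rˣ) : R) * ((x : R) - 1)
      = ((x ^ (-(m : ℤ)) : Rˣ) : R) - ((x ^ (-((m : ℤ) + 1)) : Rˣ) : R) := by
    rw [zpow_mul_sub]; congr 2; ring
  have e2 : ((x ^ (-(m : ℤ)) : Rˣ) : R) * ((x⁻¹ : Rˣ) : R)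
      = ((x ^ (-((m : ℤ) + 1)) : Rˣ) : R) := by
    rw [inv_as_zpow, zpow_mul_self]; congr 2; ring
  rw [e1]
  linear_combination -e2

/-- The scalar identity for `N ∘ M`. -/
private lemma keyNM (t j : ℕ) (h : t < j) :
    (-(((x ^ ((t : ℤ) - (j : ℤ)) : Rˣ) : R) * ((x : R) - 1)))
      + (1 - ((x⁻¹ : Rˣ) : R))
      + ∑ s ∈ Finset.Icc (t + 1) (j - 1),
          (1 - ((x⁻¹ : Rˣ) : R))
            * (-(((x ^ ((t : ℤ) - (s : ℤ)) : Rˣ) : R) * ((x : R) - 1))) = 0 := by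
  obtain ⟨m, rfl⟩ : ∃ m, j = t + 1 + m := ⟨j - t - 1, by omega⟩
  have hIcc : Finset.Icc (t + 1) (t + 1 + m - 1) = Finset.Ico (t + 1) (t + 1 + m) := by
    ext s; simp only [Finset.mem_Icc, Finset.mem_Ico]; omega
  rw [hIcc, Finset.sum_Ico_eq_sum_range]
  have hm : t + 1 + m - (t + 1) = m := by omega
  rw [hm]
  have hexp : ∀ k : ℕ, ((t : ℕ) : ℤ) - ((t + 1 + k : ℕ) : ℤ) = -1 - (k : ℤ) := by
    intro k; push_cast; ring
  simp only [hexp]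
  have hsum : ∑ k ∈ Finset.range m,
      (1 - ((x⁻¹ : Rˣ) : R)) * (-(((x ^ (-1 - (k : ℤ)) : Rˣ) : R) * ((x : R) - 1)))
      = -((1 - ((x⁻¹ : Rˣ) : R)) * (1 - ((x ^ (-(m : ℤ)) : Rˣ) : R))) := by
    have hterm : ∀ k ∈ Finset.range m,
        (1 - ((x⁻¹ : Rˣ) : R)) * (-(((x ^ (-1 - (k : ℤ)) : Rˣ) : R) * ((x : R) - 1)))
          = (((x ^ (-1 - (k : ℤ)) : Rˣ) : R) * ((x : R) - 1)) * (-(1 - ((x⁻¹ : Rˣ) : R))) := by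
      intro k _; ring
    rw [Finset.sum_congr rfl hterm, ← Finset.sum_mul, ← Finset.sum_mul, geomB]
    ring
  rw [hsum]
  have hte : ((x ^ (-1 - (m : ℤ)) : Rˣ) : R) = ((x ^ (-((m : ℤ) + 1)) : Rˣ) : R) := by
    rw [show (-1 - (m : ℤ)) = -((m : ℤ) + 1) by ring]
  rw [hte]
  have e1 : ((x ^ (-((m : ℤ) + 1)) : Rˣ) : R) * ((x : R) - 1)
      = ((x ^ (-(m : ℤ)) : Rˣ) : R) - ((x ^ (-((m : ℤ) + 1)) : Rˣ) : R) := by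
    rw [zpow_mul_sub]; congr 2; ring
  have e2 : ((x ^ (-(m : ℤ)) : Rˣ) : R) * ((x⁻¹ : Rˣ) : R)
      = ((x ^ (-((m : ℤ) + 1)) : Rˣ) : R) := by
    rw [inv_as_zpow, zpow_mul_self]; congr 2; ring
  rw [e1]
  linear_combination -e2

/-- Triangular double-sum swap. -/
private lemma tri_swap {β : Type*} [AddCommMonoid β] (i j : ℕ) (f : ℕ → ℕ → β) :
    ∑ s ∈ Finset.Icc (i + 1) (j - 1), ∑ t ∈ Finset.Icc (i + 1) (s - 1), f s t
      = ∑ t ∈ Finset.Icc (i + 1) (j - 1), ∑ s ∈ Finset.Icc (t + 1) (j - 1), f s t := by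
  have h1 : ∀ s ∈ Finset.Icc (i + 1) (j - 1),
      ∑ t ∈ Finset.Icc (i + 1) (s - 1), f s t
        = ∑ t ∈ (Finset.Icc (i + 1) (j - 1)).filter (fun t => t < s), f s t := by
    intro s hs
    rw [Finset.mem_Icc] at hs
    congr 1
    ext t
    simp only [Finset.mem_Icc, Finset.mem_filter]
    omega
  have h2 : ∀ t ∈ Finset.Icc (i + 1) (j - 1),
      ∑ s ∈ Finset.Icc (t + 1) (j - 1), f s t
        = ∑ s ∈ (Finset.Icc (i + 1) (j - 1)).filter (fun s => t < s), f s t := by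
    intro t ht
    rw [Finset.mem_Icc] at ht
    congr 1
    ext s
    simp only [Finset.mem_Icc, Finset.mem_filter]
    omega
  rw [Finset.sum_congr rfl h1, Finset.sum_congr rfl h2]
  simp only [Finset.sum_filter]
  exact Finset.sum_comm

/-- Generic composition computation. -/
private lemma comp_eq {V : Type*} [AddCommGroup V] [Module R V]
    (n : ℕ) (e : ℕ → ℕ → V) (F G : Module.End R V) (f g : ℕ → ℕ → R)
    (hF : ∀ i j, 1 ≤ i → i < j → j ≤ n + 1 →
      F (e i j) = e i j + ∑ s ∈ Finset.Icc (i + 1) (j - 1), f j s • e i s)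
    (hG : ∀ i j, 1 ≤ i → i < j → j ≤ n + 1 →
      G (e i j) = e i j + ∑ s ∈ Finset.Icc (i + 1) (j - 1), g j s • e i s)
    (hkey : ∀ t j, t < j → f j t + g j t + ∑ s ∈ Finset.Icc (t + 1) (j - 1),
      g j s * f s t = 0)
    (i j : ℕ) (hi : 1 ≤ i) (hij : i < j) (hj : j ≤ n + 1) :
    F (G (e i j)) = e i j := by
  rw [hG i j hi hij hj, map_add, map_sum, hF i j hi hij hj]
  have hFs : ∀ s ∈ Finset.Icc (i + 1) (j - 1),
      F (g j s • e i s) = g j s • e i s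
        + ∑ t ∈ Finset.Icc (i + 1) (s - 1), (g j s * f s t) • e i t := by
    intro s hs
    rw [Finset.mem_Icc] at hs
    rw [map_smul, hF i s hi (by omega) (by omega), smul_add, Finset.smul_sum]
    simp only [smul_smul]
  rw [Finset.sum_congr rfl hFs, Finset.sum_add_distrib, tri_swap]
  have : ∀ t ∈ Finset.Icc (i + 1) (j - 1),
      ∑ s ∈ Finset.Icc (t + 1) (j - 1), (g j s * f s t) • e i t
        = (∑ s ∈ Finset.Icc (t + 1) (j - 1), g j s * f s t) • e i t := by
    intro t _
    rw [Finset.sum_smul]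
  rw [Finset.sum_congr rfl this]
  have hzero : ∀ t ∈ Finset.Icc (i + 1) (j - 1),
      f j t • e i t + (g j t • e i t
        + (∑ s ∈ Finset.Icc (t + 1) (j - 1), g j s * f s t) • e i t) = 0 := by
    intro t ht
    rw [Finset.mem_Icc] at ht
    rw [← add_smul, ← add_smul, ← add_assoc, hkey t j (by omega), zero_smul]
  calc e i j + ∑ s ∈ Finset.Icc (i + 1) (j - 1), f j s • e i s
        + (∑ s ∈ Finset.Icc (i + 1) (j - 1), g j s • e i s
          + ∑ t ∈ Finset.Icc (i + 1) (j - 1),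
              (∑ s ∈ Finset.Icc (t + 1) (j - 1), g j s * f s t) • e i t)
      = e i j + ∑ t ∈ Finset.Icc (i + 1) (j - 1),
          (f j t • e i t + (g j t • e i t
            + (∑ s ∈ Finset.Icc (t + 1) (j - 1), g j s * f s t) • e i t)) := by
        rw [Finset.sum_add_distrib, Finset.sum_add_distrib]; abel
    _ = e i j := by rw [Finset.sum_congr rfl hzero, Finset.sum_const_zero, add_zero]

end Aux

/-- Let `V` be the free `R`-module with basis `e i j`, `1 ≤ i < j ≤ n+1`, and `x` a unit
of `R`. The endomorphisms `M (e i j) = e i j + Σ_{s=i+1}^{j-1} (1 - x⁻¹) • e i s` and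
`N (e i j) = e i j - Σ_{s=i+1}^{j-1} x^{s-j} (x-1) • e i s` are mutually inverse. -/
theorem M_N_mutually_inverse {R : Type*} [CommRing R] (x : Rˣ)
    {V : Type*} [AddCommGroup V] [Module R V]
    (n : ℕ) (hn : 1 ≤ n)
    (e : ℕ → ℕ → V)
    (b : Module.Basis {p : ℕ × ℕ // 1 ≤ p.1 ∧ p.1 < p.2 ∧ p.2 ≤ n + 1} R V)
    (hb : ∀ p : {p : ℕ × ℕ // 1 ≤ p.1 ∧ p.1 < p.2 ∧ p.2 ≤ n + 1}, b p = e p.1.1 p.1.2)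
    (M N : Module.End R V)
    (hM : ∀ i j, 1 ≤ i → i < j → j ≤ n + 1 →
      M (e i j) = e i j + ∑ s ∈ Finset.Icc (i + 1) (j - 1),
        (1 - ((x⁻¹ : Rˣ) : R)) • e i s)
    (hN : ∀ i j, 1 ≤ i → i < j → j ≤ n + 1 →
      N (e i j) = e i j - ∑ s ∈ Finset.Icc (i + 1) (j - 1),
        (((x ^ ((s : ℤ) - (j : ℤ)) : Rˣ) : R) * ((x : R) - 1)) • e i s) :
    M * N = 1 ∧ N * M = 1 := by
  -- put `hM` and `hN` into the generic shape
  set fM : ℕ → ℕ → R := fun _ s => 1 - ((x⁻¹ : Rˣ) : R) with hfM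
  set fN : ℕ → ℕ → R := fun j s =>
    -(((x ^ ((s : ℤ) - (j : ℤ)) : Rˣ) : R) * ((x : R) - 1)) with hfN
  have hM' : ∀ i j, 1 ≤ i → i < j → j ≤ n + 1 →
      M (e i j) = e i j + ∑ s ∈ Finset.Icc (i + 1) (j - 1), fM j s • e i s :=
    hM
  have hN' : ∀ i j, 1 ≤ i → i < j → j ≤ n + 1 →
      N (e i j) = e i j + ∑ s ∈ Finset.Icc (i + 1) (j - 1), fN j s • e i s := by
    intro i j hi hij hj
    rw [hN i j hi hij hj, sub_eq_add_neg, ← Finset.sum_neg_distrib]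
    simp only [hfN, neg_smul]
  constructor
  · apply b.ext
    rintro ⟨⟨i, j⟩, hi, hij, hj⟩
    rw [hb]
    rw [Module.End.mul_apply, Module.End.one_apply]
    show M (N (e i j)) = e i j
    refine comp_eq n e M N fM fN hM' hN' ?_ i j hi hij hj
    intro t j htj
    have := keyMN (R := R) x t j htj
    simp only [hfM, hfN]
    exact this
  · apply b.ext
    rintro ⟨⟨i, j⟩, hi, hij, hj⟩
    rw [hb]
    rw [Module.End.mul_apply, Module.End.one_apply]
    show N (M (e i j)) = e i j
    refine comp_eq n e N M fN fM hN' hM' ?_ i j hi hij hj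
    intro t j htj
    have := keyNM (R := R) x t j htj
    simp only [hfM, hfN]
    exact this
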